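/- For all real numbers x, y with 1/2 ≤ x < y < 1, we have (log y − log x) / (log(1−x) − log(1−y)) ≤ (4 − 2y)/3. -/

import Mathlib

lemma key1 (t : ℝ) (ht : 1 ≤ t) : Real.log t ≤ (t - 1/t)/2 := by
  have hmono : MonotoneOn (fun u : ℝ => (u - 1/u)/2 - Real.log u) (Set.Ici 1) := by
    have hd : ∀ s : ℝ, 1 ≤ s →
        HasDerivAt (fun u : ℝ => (u - 1/u)/2 - Real.log u) ((1 + 1/s^2)/2 - 1/s) s := by
      intro s hs
      have hs0 : s ≠ 0 := by intro h; rw [h] at hs; linarith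
      have h1 : HasDerivAt (fun u : ℝ => 1/u) (-(1/s^2)) s := by
        simpa [one_div] using (hasDerivAt_inv hs0)
      have h2 : HasDerivAt (fun u : ℝ => (u - 1/u)/2) ((1 + 1/s^2)/2) s := by
        have := ((hasDerivAt_id s).sub h1).div_const 2
        simpa using this
      have h3 : HasDerivAt Real.log s⁻¹ s := Real.hasDerivAt_log hs0
      have := h2.sub h3; rw [← one_div] at this; exact this
    apply monotoneOn_of_deriv_nonneg (convex_Ici 1)
    · intro s hs
      exact (hd s hs).continuousAt.continuousWithinAt
    · intro s hs
      rw [interior_Ici] at hs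
      exact (hd s (le_of_lt hs)).differentiableAt.differentiableWithinAt
    · intro s hs
      rw [interior_Ici] at hs
      rw [(hd s (le_of_lt hs)).deriv]
      have hs1 : (1:ℝ) < s := hs
      have hs0 : (0:ℝ) < s := by linarith
      have : (1 + 1/s^2)/2 - 1/s = (s-1)^2/(2*s^2) := by field_simp; ring
      rw [this]
      positivity
  have := hmono (Set.mem_Ici.2 le_rfl) (Set.mem_Ici.2 ht) ht
  simp only [Real.log_one] at this
  norm_num at this
  rw [one_div]
  linarith

lemma key2 (t : ℝ) (ht : 1 ≤ t) : 2*(t-1)/(t+1) ≤ Real.log t := by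
  have hmono : MonotoneOn (fun u : ℝ => Real.log u - 2*(u-1)/(u+1)) (Set.Ici 1) := by
    have hd : ∀ s : ℝ, 1 ≤ s →
        HasDerivAt (fun u : ℝ => Real.log u - 2*(u-1)/(u+1)) (1/s - 4/(s+1)^2) s := by
      intro s hs
      have hs0 : s ≠ 0 := by intro h; rw [h] at hs; linarith
      have hs1 : s + 1 ≠ 0 := by intro h; nlinarith
      have h3 : HasDerivAt Real.log s⁻¹ s := Real.hasDerivAt_log hs0
      have h1 : HasDerivAt (fun u : ℝ => 2*(u-1)/(u+1))
          ((2*(s+1) - 2*(s-1)*1)/(s+1)^2) s := by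
        have ha : HasDerivAt (fun u : ℝ => 2*(u-1)) 2 s := by
          simpa using ((hasDerivAt_id s).sub_const 1).const_mul 2
        have hb : HasDerivAt (fun u : ℝ => u+1) 1 s := by
          simpa using (hasDerivAt_id s).add_const 1
        exact ha.div hb hs1
      have : (2*(s+1) - 2*(s-1)*1)/(s+1)^2 = 4/(s+1)^2 := by field_simp; ring
      rw [this] at h1
      have := h3.sub h1; rw [← one_div] at this; exact this
    apply monotoneOn_of_deriv_nonneg (convex_Ici 1)
    · intro s hs
      exact (hd s hs).continuousAt.continuousWithinAt
    · intro s hs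
      rw [interior_Ici] at hs
      exact (hd s (le_of_lt hs)).differentiableAt.differentiableWithinAt
    · intro s hs
      rw [interior_Ici] at hs
      rw [(hd s (le_of_lt hs)).deriv]
      have hs1 : (1:ℝ) < s := hs
      have hs0 : (0:ℝ) < s := by linarith
      have : 1/s - 4/(s+1)^2 = (s-1)^2/(s*(s+1)^2) := by field_simp; ring
      rw [this]
      positivity
  have := hmono (Set.mem_Ici.2 le_rfl) (Set.mem_Ici.2 ht) ht
  simp only [Real.log_one] at this
  norm_num at this
  linarith

theorem stmt_0 (x y : ℝ) (hx : 1/2 ≤ x) (hxy : x < y) (hy : y < 1) :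
    (Real.log y - Real.log x) / (Real.log (1 - x) - Real.log (1 - y)) ≤ (4 - 2*y) / 3 := by
  have hx0 : 0 < x := by linarith
  have hy0 : 0 < y := by linarith
  have h1x : 0 < 1 - x := by linarith
  have h1y : 0 < 1 - y := by linarith
  -- upper bound on numerator
  have ht1 : (1:ℝ) ≤ y/x := by rw [le_div_iff₀ hx0]; linarith
  have h1 := key1 (y/x) ht1
  rw [Real.log_div (ne_of_gt hy0) (ne_of_gt hx0)] at h1
  have e1 : (y/x - 1/(y/x))/2 = (y-x)*(x+y)/(2*(x*y)) := by
    field_simp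
    ring
  rw [e1] at h1
  -- lower bound on denominator
  have ht2 : (1:ℝ) ≤ (1-x)/(1-y) := by rw [le_div_iff₀ h1y]; linarith
  have h2 := key2 ((1-x)/(1-y)) ht2
  rw [Real.log_div (ne_of_gt h1x) (ne_of_gt h1y)] at h2
  have h2xy : (0:ℝ) < 2 - x - y := by linarith
  have e2 : 2*((1-x)/(1-y) - 1)/((1-x)/(1-y) + 1) = 2*(y-x)/(2-x-y) := by
    have h1y' : (1:ℝ) - y ≠ 0 := ne_of_gt h1y
    have h2' : (2:ℝ) - x - y ≠ 0 := ne_of_gt h2xy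
    field_simp
    ring
  rw [e2] at h2
  have hB : 0 < Real.log (1 - x) - Real.log (1 - y) := by
    have : 0 < 2*(y-x)/(2-x-y) := div_pos (by linarith) h2xy
    linarith
  rw [div_le_div_iff₀ hB (by norm_num : (0:ℝ) < 3)]
  have hv : (0:ℝ) < y - x := by linarith
  have key : (3*((y-x)*(x+y)))/(2*(x*y)) ≤ ((4 - 2*y) * (2*(y-x)))/(2-x-y) := by
    rw [div_le_div_iff₀ (by positivity) h2xy]
    have ha : (0:ℝ) ≤ x - 1/2 := by linarith
    have hb : (0:ℝ) ≤ y - 1/2 := by linarith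
    nlinarith [mul_nonneg hv.le ha, mul_nonneg hv.le hb,
      mul_nonneg (mul_nonneg hv.le ha) ha, mul_nonneg (mul_nonneg hv.le ha) hb,
      mul_nonneg (mul_nonneg hv.le hb) h1y.le,
      mul_nonneg (mul_nonneg (mul_nonneg hv.le hb) h1y.le) ha]
  have hA : (0:ℝ) ≤ 4 - 2*y := by linarith
  calc (Real.log y - Real.log x) * 3
      ≤ (3*((y-x)*(x+y)))/(2*(x*y)) := by rw [mul_div_assoc]; linarith
    _ ≤ ((4 - 2*y) * (2*(y-x)))/(2-x-y) := key
    _ ≤ (4 - 2*y) * (Real.log (1-x) - Real.log (1-y)) := by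
        rw [mul_div_assoc]
        exact mul_le_mul_of_nonneg_left h2 hA
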